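/- arXiv:1512.01767 — 3 statements merged into one kernel-verified Lean document; each statement's English description precedes it below -/
import Mathlib

section
/- Let 0 ≤ γ ≤ β < 1 be real numbers. For each integer n ≥ 2, set m_n = ⌈n^β⌉ and l_n = ⌈n^γ⌉, and let B_1, …, B_{l_n} be independent identically distributed random variables on a probability space taking values in {0,1} with P(B_j = 1) = 1/m_n. Then m_n² · P( ∑_{j=1}^{l_n} B_j ≥ log n ) tends to 0 as n → ∞. -/
open MeasureTheory ProbabilityTheory Filter
open scoped ENNReal Nat

/-- **Key estimate for Regime A-1 in the proof of Lemma 5**: with `m_n = ⌈n^β⌉` and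
`l_n = ⌈n^γ⌉` (where `0 ≤ γ ≤ β < 1`), and i.i.d. `{0,1}`-valued `B_1, …, B_{l_n}`
with `P(B_j = 1) = 1/m_n`, one has `m_n² · P(∑ B_j ≥ log n) → 0` as `n → ∞`. -/
theorem stmt_6
    (β γ : ℝ) (hγ0 : 0 ≤ γ) (hγβ : γ ≤ β) (hβ1 : β < 1)
    (Ω : ℕ → Type*) [∀ n, MeasurableSpace (Ω n)]
    (μ : (n : ℕ) → Measure (Ω n)) [∀ n, IsProbabilityMeasure (μ n)]
    (B : (n : ℕ) → Fin ⌈(n : ℝ) ^ γ⌉₊ → Ω n → ℝ)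
    (hmeas : ∀ n j, Measurable (B n j))
    (hval : ∀ n j ω, B n j ω = 0 ∨ B n j ω = 1)
    (hprob : ∀ n : ℕ, 2 ≤ n → ∀ j,
      μ n {ω | B n j ω = 1} = ((⌈(n : ℝ) ^ β⌉₊ : ℝ≥0∞))⁻¹)
    (hindep : ∀ n, iIndepFun (B n) (μ n)) :
    Tendsto
      (fun n : ℕ => ((⌈(n : ℝ) ^ β⌉₊ : ℝ)) ^ 2
        * (μ n {ω | Real.log n ≤ ∑ j, B n j ω}).toReal)
      atTop (nhds 0) := by
  set k : ℕ → ℕ := fun n => ⌈Real.log n⌉₊ with hk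
  -- the dominating sequence
  set g : ℕ → ℝ := fun n => 4 * Real.exp 2 ^ k n / ((k n)!) with hg
  have hgto : Tendsto g atTop (nhds 0) := by
    have h1 : Tendsto (fun j : ℕ => 4 * (Real.exp 2 ^ j / (j !))) atTop (nhds 0) := by
      simpa using (FloorSemiring.tendsto_pow_div_factorial_atTop (Real.exp 2)).const_mul 4
    have h2 : Tendsto k atTop atTop := by
      have hlog : Tendsto (fun n : ℕ => Real.log n) atTop atTop :=
        Real.tendsto_log_atTop.comp tendsto_natCast_atTop_atTop
      refine tendsto_atTop.2 fun b => ?_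
      filter_upwards [hlog.eventually_ge_atTop (b : ℝ)] with n hn
      have : (b : ℝ) ≤ (⌈Real.log n⌉₊ : ℝ) := hn.trans (Nat.le_ceil _)
      exact_mod_cast this
    have := h1.comp h2
    simpa [hg, Function.comp_def, mul_div_assoc] using this
  -- main bound
  have key : ∀ n : ℕ, 2 ≤ n →
      ((⌈((n : ℕ) : ℝ) ^ β⌉₊ : ℝ)) ^ 2
        * (μ n {ω | Real.log n ≤ ∑ j, B n j ω}).toReal ≤ g n := by
    intro n hn
    set l : ℕ := ⌈(n : ℝ) ^ γ⌉₊ with hl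
    set m : ℕ := ⌈(n : ℝ) ^ β⌉₊ with hm
    have hn1 : (1 : ℝ) ≤ (n : ℝ) := by exact_mod_cast hn.trans' (by norm_num)
    have hrpowβpos : (0 : ℝ) < (n : ℝ) ^ β := Real.rpow_pos_of_pos (by linarith) β
    have hm1 : 1 ≤ m := Nat.one_le_ceil_iff.2 hrpowβpos
    have hmpos : (0 : ℝ) < (m : ℝ) := by exact_mod_cast hm1
    have hlm : l ≤ m :=
      Nat.ceil_le_ceil (Real.rpow_le_rpow_of_exponent_le hn1 hγβ)
    -- event inclusion
    have hsub : {ω | Real.log n ≤ ∑ j, B n j ω} ⊆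
        ⋃ T ∈ Finset.powersetCard (k n) (Finset.univ : Finset (Fin l)),
          ⋂ j ∈ T, {ω | B n j ω = 1} := by
      intro ω hω
      simp only [Set.mem_setOf_eq] at hω
      set S : Finset (Fin l) := Finset.univ.filter (fun j => B n j ω = 1) with hS
      have hsum : ∑ j, B n j ω = (S.card : ℝ) := by
        have h1 : ∑ j ∈ S, B n j ω = ∑ j, B n j ω :=
          Finset.sum_filter_of_ne fun j _ hne => (hval n j ω).resolve_left hne
        rw [← h1, Finset.sum_congr rfl (fun j hj => (Finset.mem_filter.1 hj).2),
          Finset.sum_const, nsmul_eq_mul, mul_one]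
      have hkS : k n ≤ S.card := by
        rw [hk]
        exact Nat.ceil_le.2 (by rw [← hsum]; exact hω)
      obtain ⟨T, hTS, hTcard⟩ := Finset.exists_subset_card_eq hkS
      refine Set.mem_biUnion (Finset.mem_powersetCard_univ.2 hTcard) ?_
      exact Set.mem_biInter fun j hj => (Finset.mem_filter.1 (hTS hj)).2
    -- measure of each intersection
    have hinter : ∀ T ∈ Finset.powersetCard (k n) (Finset.univ : Finset (Fin l)),
        μ n (⋂ j ∈ T, {ω | B n j ω = 1}) = ((m : ℝ≥0∞))⁻¹ ^ (k n) := by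
      intro T hT
      have hTcard := (Finset.mem_powersetCard_univ.1 hT)
      have := (hindep n).meas_biInter (S := T)
        (s := fun j => {ω | B n j ω = 1})
        (fun j _ => ⟨{1}, measurableSet_singleton 1, rfl⟩)
      rw [this, Finset.prod_congr rfl (fun j _ => hprob n hn j), Finset.prod_const, hTcard]
    -- union bound
    have hbound : μ n {ω | Real.log n ≤ ∑ j, B n j ω} ≤
        (l.choose (k n) : ℝ≥0∞) * ((m : ℝ≥0∞))⁻¹ ^ (k n) := by
      calc μ n {ω | Real.log n ≤ ∑ j, B n j ω}
          ≤ μ n (⋃ T ∈ Finset.powersetCard (k n) (Finset.univ : Finset (Fin l)),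
              ⋂ j ∈ T, {ω | B n j ω = 1}) := measure_mono hsub
        _ ≤ ∑ T ∈ Finset.powersetCard (k n) (Finset.univ : Finset (Fin l)),
              μ n (⋂ j ∈ T, {ω | B n j ω = 1}) := measure_biUnion_finset_le _ _
        _ = (l.choose (k n) : ℝ≥0∞) * ((m : ℝ≥0∞))⁻¹ ^ (k n) := by
            rw [Finset.sum_congr rfl hinter, Finset.sum_const, Finset.card_powersetCard,
              Finset.card_univ, Fintype.card_fin, nsmul_eq_mul]
    -- pass to real
    have hmE : ((m : ℝ≥0∞))⁻¹ ≠ ⊤ :=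
      ENNReal.inv_ne_top.2 (Nat.cast_ne_zero.2 (by omega))
    have hCne : (l.choose (k n) : ℝ≥0∞) * ((m : ℝ≥0∞))⁻¹ ^ (k n) ≠ ⊤ :=
      ENNReal.mul_ne_top (ENNReal.natCast_ne_top _) (ENNReal.pow_ne_top hmE)
    have hreal : (μ n {ω | Real.log n ≤ ∑ j, B n j ω}).toReal ≤
        (l.choose (k n) : ℝ) * ((m : ℝ))⁻¹ ^ (k n) := by
      have := ENNReal.toReal_mono hCne hbound
      rwa [ENNReal.toReal_mul, ENNReal.toReal_pow, ENNReal.toReal_inv, ENNReal.toReal_natCast,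
        ENNReal.toReal_natCast] at this
    -- real estimates
    have hchoose : (l.choose (k n) : ℝ) ≤ (m : ℝ) ^ (k n) / ((k n)!) := by
      calc (l.choose (k n) : ℝ) ≤ (m.choose (k n) : ℝ) := by
            exact_mod_cast Nat.choose_le_choose _ hlm
        _ ≤ (m : ℝ) ^ (k n) / ((k n)!) := by
            have := Nat.choose_le_pow_div (α := ℝ) (k n) m
            simpa using this
    have hstep : (μ n {ω | Real.log n ≤ ∑ j, B n j ω}).toReal ≤ 1 / ((k n)!) := by
      refine hreal.trans ?_
      have hmk : (0 : ℝ) < (m : ℝ) ^ (k n) := by positivity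
      rw [inv_pow]
      calc (l.choose (k n) : ℝ) * ((m : ℝ) ^ (k n))⁻¹
          ≤ ((m : ℝ) ^ (k n) / ((k n)!)) * ((m : ℝ) ^ (k n))⁻¹ :=
            mul_le_mul_of_nonneg_right hchoose (by positivity)
        _ = 1 / ((k n)!) := by field_simp
    -- m ≤ 2 exp (k n)
    have hlogle : Real.log n ≤ (k n : ℝ) := Nat.le_ceil _
    have hnle : (n : ℝ) ≤ Real.exp (k n) := by
      calc (n : ℝ) = Real.exp (Real.log n) := (Real.exp_log (by linarith)).symm
        _ ≤ Real.exp (k n) := Real.exp_le_exp.2 hlogle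
    have hmle : (m : ℝ) ≤ 2 * Real.exp (k n) := by
      have h1 : (m : ℝ) < (n : ℝ) ^ β + 1 := Nat.ceil_lt_add_one (le_of_lt hrpowβpos)
      have h2 : (n : ℝ) ^ β ≤ (n : ℝ) := by
        calc (n : ℝ) ^ β ≤ (n : ℝ) ^ (1 : ℝ) :=
              Real.rpow_le_rpow_of_exponent_le hn1 (le_of_lt hβ1)
          _ = (n : ℝ) := Real.rpow_one _
      have h3 : (1 : ℝ) ≤ Real.exp (k n) := by
        have := Real.exp_nonneg (k n : ℝ); nlinarith [Real.one_le_exp (by positivity : (0:ℝ) ≤ (k n : ℝ))]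
      nlinarith
    have hexp2 : (2 * Real.exp (k n)) ^ 2 ≤ 4 * Real.exp 2 ^ (k n) := by
      have h : Real.exp 2 ^ (k n) = Real.exp ((k n : ℝ)) ^ 2 := by
        rw [← Real.exp_nat_mul, ← Real.exp_nat_mul]
        norm_num [mul_comm]
      rw [h]; nlinarith [Real.exp_nonneg ((k n : ℝ))]
    have hmsq : ((m : ℝ)) ^ 2 ≤ 4 * Real.exp 2 ^ (k n) := by
      have : ((m : ℝ)) ^ 2 ≤ (2 * Real.exp (k n)) ^ 2 := by nlinarith
      linarith
    calc ((m : ℝ)) ^ 2 * (μ n {ω | Real.log n ≤ ∑ j, B n j ω}).toReal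
        ≤ ((m : ℝ)) ^ 2 * (1 / ((k n)!)) := by
          exact mul_le_mul_of_nonneg_left hstep (by positivity)
      _ ≤ (4 * Real.exp 2 ^ (k n)) * (1 / ((k n)!)) := by
          have hpos : (0:ℝ) ≤ 1 / ((k n)!) := by positivity
          exact mul_le_mul_of_nonneg_right hmsq hpos
      _ = g n := by rw [hg]; field_simp
  -- squeeze
  refine squeeze_zero' ?_ ?_ hgto
  · filter_upwards with n; positivity
  · filter_upwards [eventually_ge_atTop 2] with n hn using key n hn
end

section
/- Let 1/3 ≤ β < 1 and ε ∈ (0, 1/2) be real numbers. For each integer n ≥ 2, set m_n = ⌈n^β⌉ and N_n = ⌈(n/m_n)^{1/2−ε}⌉, and let B_1, …, B_{N_n} be independent identically distributed random variables on a probability space taking values in {0,1} with P(B_j = 1) = 1/m_n. Then m_n² · P( ∑_{j=1}^{N_n} B_j ≥ log n ) tends to 0 as n → ∞. -/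
open MeasureTheory ProbabilityTheory Filter
open scoped ENNReal

/-- **Key estimate for Regimes B-1, B-2, B-3 in the proof of Lemma 5**: with
`m_n = ⌈n^β⌉` (where `1/3 ≤ β < 1`), `N_n = ⌈(n/m_n)^{1/2−ε}⌉` (where `0 < ε < 1/2`),
and i.i.d. `{0,1}`-valued `B_1, …, B_{N_n}` with `P(B_j = 1) = 1/m_n`, one has
`m_n² · P(∑ B_j ≥ log n) → 0` as `n → ∞`. -/
theorem stmt_8
    (β ε : ℝ) (hβ0 : 1 / 3 ≤ β) (hβ1 : β < 1) (hε0 : 0 < ε) (hε1 : ε < 1 / 2)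
    (Ω : ℕ → Type*) [∀ n, MeasurableSpace (Ω n)]
    (μ : (n : ℕ) → Measure (Ω n)) [∀ n, IsProbabilityMeasure (μ n)]
    (B : (n : ℕ) → Fin ⌈((n : ℝ) / (⌈(n : ℝ) ^ β⌉₊ : ℝ)) ^ (1 / 2 - ε)⌉₊ → Ω n → ℝ)
    (hmeas : ∀ n j, Measurable (B n j))
    (hval : ∀ n j ω, B n j ω = 0 ∨ B n j ω = 1)
    (hprob : ∀ n : ℕ, 2 ≤ n → ∀ j,
      μ n {ω | B n j ω = 1} = ((⌈(n : ℝ) ^ β⌉₊ : ℝ≥0∞))⁻¹)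
    (hindep : ∀ n, iIndepFun (B n) (μ n)) :
    Tendsto
      (fun n : ℕ => ((⌈(n : ℝ) ^ β⌉₊ : ℝ)) ^ 2
        * (μ n {ω | Real.log n ≤ ∑ j, B n j ω}).toReal)
      atTop (nhds 0) := by
  set c : ℝ := Real.exp 3 - 1 with hcdef
  have hc0 : 0 ≤ c := by
    have := Real.add_one_le_exp (3 : ℝ)
    simp only [hcdef]; linarith
  have hβpos : 0 < β := by linarith
  apply squeeze_zero' (g := fun n : ℕ => (4 * Real.exp (2 * c)) / n)
  · filter_upwards with n
    positivity
  · filter_upwards [eventually_ge_atTop 2] with n hn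
    have hn1 : (1 : ℝ) ≤ (n : ℝ) := by exact_mod_cast Nat.one_le_of_lt hn
    have hnpos : (0 : ℝ) < n := by linarith
    set m : ℕ := ⌈(n : ℝ) ^ β⌉₊ with hmdef
    set Nn : ℕ := ⌈((n : ℝ) / (m : ℝ)) ^ (1 / 2 - ε)⌉₊ with hNdef
    have hnb1 : (1 : ℝ) ≤ (n : ℝ) ^ β := Real.one_le_rpow hn1 hβpos.le
    have hnb0 : (0 : ℝ) < (n : ℝ) ^ β := by linarith
    have hm_lb : (n : ℝ) ^ β ≤ (m : ℝ) := Nat.le_ceil _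
    have hm1 : (1 : ℝ) ≤ (m : ℝ) := le_trans hnb1 hm_lb
    have hm0 : (0 : ℝ) < (m : ℝ) := by linarith
    have hm_ub : (m : ℝ) ≤ 2 * (n : ℝ) ^ β := by
      have := Nat.ceil_lt_add_one hnb0.le (R := ℝ)
      simp only [← hmdef] at this
      linarith
    -- bound on N * (1/m)
    have hNp : (Nn : ℝ) * (m : ℝ)⁻¹ ≤ 2 := by
      have h1 : (n : ℝ) / (m : ℝ) ≤ (n : ℝ) ^ (1 - β) := by
        rw [div_le_iff₀ hm0]
        calc (n : ℝ) = (n : ℝ) ^ (1 - β) * (n : ℝ) ^ β := by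
              rw [← Real.rpow_add hnpos]; norm_num
          _ ≤ (n : ℝ) ^ (1 - β) * (m : ℝ) := by
              apply mul_le_mul_of_nonneg_left hm_lb
              positivity
      have hhalf : (0 : ℝ) ≤ 1 / 2 - ε := by linarith
      have h2 : ((n : ℝ) / (m : ℝ)) ^ (1 / 2 - ε) ≤ (n : ℝ) ^ ((1 - β) * (1 / 2 - ε)) := by
        rw [Real.rpow_mul hnpos.le]
        exact Real.rpow_le_rpow (by positivity) h1 hhalf
      have hN_ub : (Nn : ℝ) ≤ (n : ℝ) ^ ((1 - β) * (1 / 2 - ε)) + 1 := by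
        have := Nat.ceil_lt_add_one (R := ℝ) (a := ((n : ℝ) / (m : ℝ)) ^ (1 / 2 - ε))
          (by positivity)
        simp only [← hNdef] at this
        linarith
      have key : ((n : ℝ) ^ ((1 - β) * (1 / 2 - ε)) + 1) * (m : ℝ)⁻¹ ≤ 2 := by
        have hminv : (m : ℝ)⁻¹ ≤ ((n : ℝ) ^ β)⁻¹ := by
          exact inv_anti₀ hnb0 hm_lb
        have e1 : (n : ℝ) ^ ((1 - β) * (1 / 2 - ε)) * ((n : ℝ) ^ β)⁻¹
            = (n : ℝ) ^ ((1 - β) * (1 / 2 - ε) - β) := by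
          rw [Real.rpow_sub hnpos]
          exact (div_eq_mul_inv _ _).symm
        have e2 : (n : ℝ) ^ ((1 - β) * (1 / 2 - ε) - β) ≤ 1 := by
          apply Real.rpow_le_one_of_one_le_of_nonpos hn1
          nlinarith
        have e3 : ((n : ℝ) ^ β)⁻¹ ≤ 1 := by
          rw [inv_le_one_iff₀]; right; exact hnb1
        have h5 : (n : ℝ) ^ ((1 - β) * (1 / 2 - ε)) * (m : ℝ)⁻¹ ≤ 1 := by
          calc (n : ℝ) ^ ((1 - β) * (1 / 2 - ε)) * (m : ℝ)⁻¹
              ≤ (n : ℝ) ^ ((1 - β) * (1 / 2 - ε)) * ((n : ℝ) ^ β)⁻¹ := by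
                apply mul_le_mul_of_nonneg_left hminv; positivity
            _ = _ := e1
            _ ≤ 1 := e2
        have h6 : (m : ℝ)⁻¹ ≤ 1 := by
          rw [inv_le_one_iff₀]; right; exact hm1
        calc ((n : ℝ) ^ ((1 - β) * (1 / 2 - ε)) + 1) * (m : ℝ)⁻¹
            = (n : ℝ) ^ ((1 - β) * (1 / 2 - ε)) * (m : ℝ)⁻¹ + (m : ℝ)⁻¹ := by ring
          _ ≤ 1 + 1 := add_le_add h5 h6
          _ = 2 := by norm_num
      calc (Nn : ℝ) * (m : ℝ)⁻¹ ≤ ((n : ℝ) ^ ((1 - β) * (1 / 2 - ε)) + 1) * (m : ℝ)⁻¹ := by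
            apply mul_le_mul_of_nonneg_right hN_ub; positivity
        _ ≤ 2 := key
    -- probability of each B = 1, in real numbers
    have hmne : (m : ℕ) ≠ 0 := by
      intro h
      rw [h] at hm1; norm_num at hm1
    have hp : ∀ j, (μ n {ω | B n j ω = 1}).toReal = (m : ℝ)⁻¹ := by
      intro j
      rw [hprob n hn j]
      rw [ENNReal.toReal_inv]
      simp
      rfl
    -- B is an indicator, compute its integral
    have hBind : ∀ j, B n j = Set.indicator {ω | B n j ω = 1} (fun _ => (1 : ℝ)) := by
      intro j
      funext ω
      rcases hval n j ω with h | h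
      · rw [h, Set.indicator_of_notMem]
        simp only [Set.mem_setOf_eq, h]
        norm_num
      · rw [h, Set.indicator_of_mem]
        exact h
    have hBint : ∀ j, ∫ ω, B n j ω ∂(μ n) = (m : ℝ)⁻¹ := by
      intro j
      rw [← hp j]
      conv_lhs => rw [hBind j]
      exact integral_indicator_one ((hmeas n j) (measurableSet_singleton 1))
    have hBle : ∀ j ω, B n j ω ≤ 1 := by
      intro j ω; rcases hval n j ω with h | h <;> rw [h] <;> norm_num
    have hB0 : ∀ j ω, 0 ≤ B n j ω := by
      intro j ω; rcases hval n j ω with h | h <;> rw [h] <;> norm_num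
    have hBintegrable : ∀ j, Integrable (B n j) (μ n) := by
      intro j
      apply Integrable.mono' (integrable_const (1 : ℝ))
        (hmeas n j).aestronglyMeasurable
      filter_upwards with ω
      rw [Real.norm_eq_abs, abs_le]
      exact ⟨by linarith [hB0 j ω], hBle j ω⟩
    -- mgf of each B at t = 3
    have hexpB : ∀ j ω, Real.exp (3 * B n j ω) = 1 + c * B n j ω := by
      intro j ω
      rcases hval n j ω with h | h <;> rw [h] <;> simp [hcdef]
    have hmgf : ∀ j, mgf (B n j) (μ n) 3 = 1 + c * (m : ℝ)⁻¹ := by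
      intro j
      unfold mgf
      rw [show (fun ω => Real.exp (3 * B n j ω)) = fun ω => 1 + c * B n j ω from
        funext fun ω => hexpB j ω]
      rw [integral_add (integrable_const 1) ((hBintegrable j).const_mul c),
        integral_const_mul, hBint j]
      simp
    -- the sum and its bound
    have hsum_le : ∀ ω, ∑ j, B n j ω ≤ (Nn : ℝ) := by
      intro ω
      calc ∑ j, B n j ω ≤ ∑ _j : Fin Nn, (1 : ℝ) :=
            Finset.sum_le_sum fun j _ => hBle j ω
        _ = (Nn : ℝ) := by simp
    have hSmeas : Measurable (fun ω => ∑ j, B n j ω) := by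
      apply Finset.measurable_sum
      intro j _; exact hmeas n j
    have hSint : Integrable (fun ω => Real.exp (3 * ∑ j, B n j ω)) (μ n) := by
      apply Integrable.mono' (integrable_const (Real.exp (3 * Nn)))
        ((hSmeas.const_mul 3).exp.aestronglyMeasurable)
      filter_upwards with ω
      rw [Real.norm_eq_abs, abs_of_pos (Real.exp_pos _), Real.exp_le_exp]
      have := hsum_le ω
      linarith
    -- Chernoff bound
    have hcher : (μ n {ω | Real.log n ≤ ∑ j, B n j ω}).toReal
        ≤ Real.exp (-3 * Real.log n) * mgf (fun ω => ∑ j, B n j ω) (μ n) 3 :=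
      measure_ge_le_exp_mul_mgf (Real.log n) (by norm_num) hSint
    -- mgf of the sum
    have hmgfsum : mgf (fun ω => ∑ j, B n j ω) (μ n) 3 ≤ Real.exp (2 * c) := by
      have heq : (fun ω => ∑ j, B n j ω) = ∑ j, B n j := by
        funext ω; rw [Finset.sum_apply]
      rw [heq, (hindep n).mgf_sum (hmeas n) Finset.univ]
      have : ∀ j ∈ Finset.univ, mgf (B n j) (μ n) 3 = 1 + c * (m : ℝ)⁻¹ :=
        fun j _ => hmgf j
      rw [Finset.prod_congr rfl this, Finset.prod_const, Finset.card_univ,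
        Fintype.card_fin]
      have h1 : (1 + c * (m : ℝ)⁻¹) ^ Nn ≤ Real.exp (c * (m : ℝ)⁻¹) ^ Nn := by
        apply pow_le_pow_left₀ (by positivity)
        linarith [Real.add_one_le_exp (c * (m : ℝ)⁻¹)]
      calc (1 + c * (m : ℝ)⁻¹) ^ Nn ≤ Real.exp (c * (m : ℝ)⁻¹) ^ Nn := h1
        _ = Real.exp ((Nn : ℝ) * (c * (m : ℝ)⁻¹)) := by
            rw [← Real.exp_nat_mul]
        _ ≤ Real.exp (2 * c) := by
            rw [Real.exp_le_exp]
            calc (Nn : ℝ) * (c * (m : ℝ)⁻¹) = ((Nn : ℝ) * (m : ℝ)⁻¹) * c := by ring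
              _ ≤ 2 * c := mul_le_mul_of_nonneg_right hNp hc0
    -- assemble
    have hexplog : Real.exp (-3 * Real.log n) = (n : ℝ) ^ (-3 : ℝ) := by
      rw [Real.rpow_def_of_pos hnpos]
      ring_nf
    have hP : (μ n {ω | Real.log n ≤ ∑ j, B n j ω}).toReal
        ≤ (n : ℝ) ^ (-3 : ℝ) * Real.exp (2 * c) := by
      calc (μ n {ω | Real.log n ≤ ∑ j, B n j ω}).toReal
          ≤ Real.exp (-3 * Real.log n) * mgf (fun ω => ∑ j, B n j ω) (μ n) 3 := hcher
        _ ≤ Real.exp (-3 * Real.log n) * Real.exp (2 * c) := by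
            apply mul_le_mul_of_nonneg_left hmgfsum (Real.exp_pos _).le
        _ = (n : ℝ) ^ (-3 : ℝ) * Real.exp (2 * c) := by rw [hexplog]
    have hm2 : (m : ℝ) ^ 2 ≤ 4 * (n : ℝ) ^ (2 : ℝ) := by
      have h1 : (m : ℝ) ^ 2 ≤ (2 * (n : ℝ) ^ β) ^ 2 := by
        apply pow_le_pow_left₀ hm0.le hm_ub
      have h2 : ((n : ℝ) ^ β) ^ 2 = (n : ℝ) ^ (2 * β) := by
        rw [← Real.rpow_natCast ((n : ℝ) ^ β) 2, ← Real.rpow_mul hnpos.le]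
        norm_num [mul_comm]
      have h3 : (n : ℝ) ^ (2 * β) ≤ (n : ℝ) ^ (2 : ℝ) := by
        apply Real.rpow_le_rpow_of_exponent_le hn1
        linarith
      calc (m : ℝ) ^ 2 ≤ (2 * (n : ℝ) ^ β) ^ 2 := h1
        _ = 4 * (n : ℝ) ^ (2 * β) := by rw [mul_pow, ← h2]; norm_num
        _ ≤ 4 * (n : ℝ) ^ (2 : ℝ) := by linarith
    have hfin : (n : ℝ) ^ (2 : ℝ) * (n : ℝ) ^ (-3 : ℝ) = (n : ℝ)⁻¹ := by
      rw [← Real.rpow_add hnpos]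
      norm_num [Real.rpow_neg_one]
    calc (m : ℝ) ^ 2 * (μ n {ω | Real.log n ≤ ∑ j, B n j ω}).toReal
        ≤ (4 * (n : ℝ) ^ (2 : ℝ)) * ((n : ℝ) ^ (-3 : ℝ) * Real.exp (2 * c)) := by
          apply mul_le_mul hm2 hP ENNReal.toReal_nonneg (by positivity)
      _ = 4 * Real.exp (2 * c) * ((n : ℝ) ^ (2 : ℝ) * (n : ℝ) ^ (-3 : ℝ)) := by ring
      _ = 4 * Real.exp (2 * c) / n := by rw [hfin]; ring
  · exact tendsto_const_div_atTop_nhds_zero_nat _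
end

section
/- Let 0 ≤ β < 1/3 and δ ∈ (0,1) be real numbers, and let ε satisfy 0 < ε < (1−3β)/(2(1−β)). For each integer n ≥ 2, set m_n = ⌈n^β⌉ and N_n = ⌈(n/m_n)^{1/2−ε}⌉, and let B_1, …, B_{N_n} be independent identically distributed random variables on a probability space taking values in {0,1} with P(B_j = 1) = 1/m_n. Then m_n² · P( ∑_{j=1}^{N_n} B_j ≥ (1+δ)·N_n/m_n ) tends to 0 as n → ∞. -/
open MeasureTheory ProbabilityTheory Filter
open scoped ENNReal

lemma chernoff_bernoulli {Ω : Type*} [MeasurableSpace Ω] (μ : Measure Ω) [IsProbabilityMeasure μ]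
    {N : ℕ} (B : Fin N → Ω → ℝ) (hmeas : ∀ j, Measurable (B j))
    (hval : ∀ j ω, B j ω = 0 ∨ B j ω = 1)
    (p : ℝ) (hp0 : 0 ≤ p) (hp : ∀ j, (μ {ω | B j ω = 1}).toReal = p)
    (hindep : iIndepFun B μ)
    (δ : ℝ) (hδ : 0 < δ) :
    (μ {ω | (1 + δ) * N * p ≤ ∑ j, B j ω}).toReal
      ≤ Real.exp (-(((1 + δ) * Real.log (1 + δ) - δ) * (N * p))) := by
  set s := Real.log (1 + δ) with hs
  have h1δ : (0:ℝ) < 1 + δ := by linarith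
  have hs0 : 0 ≤ s := Real.log_nonneg (by linarith)
  have hes : Real.exp s = 1 + δ := Real.exp_log h1δ
  have hB01 : ∀ j ω, 0 ≤ B j ω ∧ B j ω ≤ 1 := by
    intro j ω; rcases hval j ω with h | h <;> rw [h] <;> norm_num
  have hexpB : ∀ j ω, Real.exp (s * B j ω) = 1 + δ * B j ω := by
    intro j ω; rcases hval j ω with h | h <;> rw [h] <;> simp [hes]
  have hBint : ∀ j, Integrable (B j) μ := by
    intro j
    refine (integrable_const (1:ℝ)).mono' (hmeas j).aestronglyMeasurable ?_
    filter_upwards with ω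
    rw [Real.norm_eq_abs, abs_le]
    exact ⟨by linarith [(hB01 j ω).1], (hB01 j ω).2⟩
  have hBval : ∀ j, ∫ ω, B j ω ∂μ = p := by
    intro j
    have hset : MeasurableSet {ω | B j ω = 1} := by
      have : {ω | B j ω = 1} = (B j) ⁻¹' {1} := rfl
      rw [this]; exact hmeas j (measurableSet_singleton 1)
    have hfun : B j = Set.indicator {ω | B j ω = 1} (1 : Ω → ℝ) := by
      funext ω
      rcases hval j ω with h | h
      · rw [h, Set.indicator_of_notMem]
        simp only [Set.mem_setOf_eq, h]; norm_num
      · rw [h, Set.indicator_of_mem]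
        · rfl
        · exact h
    rw [hfun, integral_indicator_one hset]
    exact hp j
  have hmgf : ∀ j, mgf (B j) μ s = 1 + δ * p := by
    intro j
    rw [mgf]
    calc ∫ ω, Real.exp (s * B j ω) ∂μ = ∫ ω, (1 + δ * B j ω) ∂μ := by
          congr 1; funext ω; exact hexpB j ω
      _ = 1 + δ * p := by
          rw [integral_add (integrable_const 1) ((hBint j).const_mul δ),
            integral_const, integral_const_mul, hBval j]
          simp
  have hSmeas : Measurable (∑ j, B j) := by
    have h : (∑ j, B j) = fun ω => ∑ j, B j ω := by funext ω; simp
    rw [h]; exact Finset.measurable_sum _ (fun j _ => hmeas j)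
  have hSint : Integrable (fun ω => Real.exp (s * (∑ j, B j) ω)) μ := by
    refine (integrable_const (Real.exp (s * N))).mono'
      ((hSmeas.const_mul s).exp.aestronglyMeasurable) ?_
    filter_upwards with ω
    rw [Real.norm_eq_abs, abs_of_pos (Real.exp_pos _), Real.exp_le_exp]
    have hsum : (∑ j, B j) ω ≤ N := by
      rw [Finset.sum_apply]
      calc ∑ j, B j ω ≤ ∑ _j : Fin N, (1:ℝ) :=
            Finset.sum_le_sum (fun j _ => (hB01 j ω).2)
        _ = N := by simp
    exact mul_le_mul_of_nonneg_left hsum hs0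
  have key := measure_ge_le_exp_mul_mgf (X := ∑ j, B j) (μ := μ) ((1 + δ) * N * p) hs0 hSint
  rw [hindep.mgf_sum hmeas Finset.univ] at key
  have hset2 : {ω | (1 + δ) * N * p ≤ ∑ j, B j ω} = {ω | (1 + δ) * N * p ≤ (∑ j, B j) ω} := by
    ext ω; simp [Finset.sum_apply]
  rw [hset2]
  refine key.trans ?_
  have hprod : ∏ j : Fin N, mgf (B j) μ s = (1 + δ * p) ^ N := by
    simp [hmgf]
  rw [hprod]
  have h1 : (1 + δ * p) ^ N ≤ Real.exp (δ * p) ^ N := by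
    apply pow_le_pow_left₀ (by positivity) (by linarith [Real.add_one_le_exp (δ * p)])
  calc Real.exp (-s * ((1 + δ) * N * p)) * (1 + δ * p) ^ N
      ≤ Real.exp (-s * ((1 + δ) * N * p)) * Real.exp (δ * p) ^ N := by
        exact mul_le_mul_of_nonneg_left h1 (Real.exp_pos _).le
    _ = Real.exp (-(((1 + δ) * s - δ) * (N * p))) := by
        rw [← Real.exp_nat_mul, ← Real.exp_add]; ring_nf

lemma bound_tendsto_zero (c γ : ℝ) (hc : 0 < c) (hγ : 0 < γ) :
    Tendsto (fun n : ℕ => 4 * (n:ℝ) ^ (2:ℝ) * Real.exp (-(c * (n:ℝ) ^ γ)))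
      atTop (nhds 0) := by
  have hcomp : Tendsto (fun n : ℕ => (n:ℝ) ^ γ) atTop atTop :=
    (tendsto_rpow_atTop hγ).comp tendsto_natCast_atTop_atTop
  have hA := (tendsto_rpow_mul_exp_neg_mul_atTop_nhds_zero (2/γ) c hc).comp hcomp
  have hA4 : Tendsto (fun n : ℕ =>
      4 * (((n:ℝ) ^ γ) ^ (2/γ) * Real.exp (-c * (n:ℝ) ^ γ))) atTop (nhds 0) := by
    simpa using hA.const_mul (4:ℝ)
  refine hA4.congr' ?_
  filter_upwards [eventually_ge_atTop 1] with n hn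
  have hn0 : (0:ℝ) ≤ (n:ℝ) := by positivity
  have h1 : ((n:ℝ) ^ γ) ^ (2/γ) = (n:ℝ) ^ (2:ℝ) := by
    rw [← Real.rpow_mul hn0]
    congr 1
    field_simp
  rw [h1]; ring_nf

set_option maxHeartbeats 1000000 in
/-- **Key estimate for Regime B-4 in the proof of Lemma 5**: with `m_n = ⌈n^β⌉`
(where `0 ≤ β < 1/3`), `N_n = ⌈(n/m_n)^{1/2−ε}⌉` (where
`0 < ε < (1−3β)/(2(1−β))`), `δ ∈ (0,1)`, and i.i.d. `{0,1}`-valued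
`B_1, …, B_{N_n}` with `P(B_j = 1) = 1/m_n`, one has
`m_n² · P(∑ B_j ≥ (1+δ)·N_n/m_n) → 0` as `n → ∞`. -/
theorem stmt_9
    (β δ ε : ℝ) (hβ0 : 0 ≤ β) (hβ1 : β < 1 / 3)
    (hδ0 : 0 < δ) (hδ1 : δ < 1)
    (hε0 : 0 < ε) (hε1 : ε < (1 - 3 * β) / (2 * (1 - β)))
    (Ω : ℕ → Type*) [∀ n, MeasurableSpace (Ω n)]
    (μ : (n : ℕ) → Measure (Ω n)) [∀ n, IsProbabilityMeasure (μ n)]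
    (B : (n : ℕ) → Fin ⌈((n : ℝ) / (⌈(n : ℝ) ^ β⌉₊ : ℝ)) ^ (1 / 2 - ε)⌉₊ → Ω n → ℝ)
    (hmeas : ∀ n j, Measurable (B n j))
    (hval : ∀ n j ω, B n j ω = 0 ∨ B n j ω = 1)
    (hprob : ∀ n : ℕ, 2 ≤ n → ∀ j,
      μ n {ω | B n j ω = 1} = ((⌈(n : ℝ) ^ β⌉₊ : ℝ≥0∞))⁻¹)
    (hindep : ∀ n, iIndepFun (B n) (μ n)) :
    Tendsto
      (fun n : ℕ => ((⌈(n : ℝ) ^ β⌉₊ : ℝ)) ^ 2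
        * (μ n {ω | (1 + δ)
              * (⌈((n : ℝ) / (⌈(n : ℝ) ^ β⌉₊ : ℝ)) ^ (1 / 2 - ε)⌉₊ : ℝ)
              / (⌈(n : ℝ) ^ β⌉₊ : ℝ)
            ≤ ∑ j, B n j ω}).toReal)
      atTop (nhds 0) := by
  have h1β : (0:ℝ) < 1 - β := by linarith
  have h1δ : (0:ℝ) < 1 + δ := by linarith
  set Δ : ℝ := (1 + δ) * Real.log (1 + δ) - δ with hΔdef
  set γ : ℝ := (1 - β) * (1/2 - ε) - β with hγdef
  have hlog : δ / (1 + δ) < Real.log (1 + δ) := by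
    have hne : -(δ / (1 + δ)) ≠ 0 := by
      have : 0 < δ / (1 + δ) := by positivity
      linarith [this]
    have h := Real.add_one_lt_exp hne
    have h2 : (1:ℝ) / (1 + δ) < Real.exp (-(δ / (1 + δ))) := by
      have : -(δ / (1 + δ)) + 1 = 1 / (1 + δ) := by field_simp; ring
      linarith [h, this.symm.le]
    have h3 := Real.log_lt_log (by positivity) h2
    rw [Real.log_exp, Real.log_div one_ne_zero (by linarith), Real.log_one] at h3
    linarith
  have hΔpos : 0 < Δ := by
    have := mul_lt_mul_of_pos_left hlog h1δ
    have he : (1 + δ) * (δ / (1 + δ)) = δ := by field_simp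
    rw [hΔdef]; nlinarith
  have hγpos : 0 < γ := by
    have h2 : ε * (2 * (1 - β)) < 1 - 3 * β := (lt_div_iff₀ (by positivity)).mp hε1
    rw [hγdef]; nlinarith
  have h12ε : 0 < 1/2 - ε := by
    have hle : (1 - 3*β) / (2 * (1-β)) ≤ 1/2 := by
      rw [div_le_iff₀ (by positivity)]; nlinarith
    linarith
  refine squeeze_zero' ?_ ?_ (bound_tendsto_zero (Δ/4) γ (by positivity) hγpos)
  · filter_upwards with n
    exact mul_nonneg (by positivity) ENNReal.toReal_nonneg
  · filter_upwards [eventually_ge_atTop 2] with n hn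
    have hn2 : (2:ℝ) ≤ (n:ℝ) := by exact_mod_cast hn
    have hn1 : (1:ℝ) ≤ (n:ℝ) := by linarith
    have hn0 : (0:ℝ) < (n:ℝ) := by linarith
    set m : ℝ := (⌈(n:ℝ)^β⌉₊ : ℝ) with hm
    have hnb1 : 1 ≤ (n:ℝ)^β := by
      have := Real.rpow_le_rpow_of_exponent_le hn1 hβ0
      rwa [Real.rpow_zero] at this
    have hnb0 : 0 < (n:ℝ)^β := by positivity
    have hMpos : 0 < ⌈(n:ℝ)^β⌉₊ := Nat.ceil_pos.mpr hnb0
    have hm1 : (1:ℝ) ≤ m := by rw [hm]; exact_mod_cast hMpos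
    have hm0 : (0:ℝ) < m := by linarith
    have hmub : m ≤ 2 * (n:ℝ)^β := by
      rw [hm]
      have := Nat.ceil_lt_add_one hnb0.le
      linarith
    have hp : ∀ j, (μ n {ω | B n j ω = 1}).toReal = 1/m := by
      intro j
      rw [hprob n hn j, ENNReal.toReal_inv]
      simp [hm]
    have hch := chernoff_bernoulli (μ n) (B n) (hmeas n) (hval n) (1/m)
      (by positivity) hp (hindep n) δ hδ0
    set K : ℕ := ⌈((n:ℝ)/m)^(1/2-ε)⌉₊ with hK
    have heq : (1 + δ) * (K:ℝ) / m = (1 + δ) * (K:ℝ) * (1/m) := by ring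
    rw [heq]
    -- bound on K/m from below
    have ha : ((n:ℝ)/m)^(1/2-ε) ≤ (K:ℝ) := Nat.le_ceil _
    have step1 : (n:ℝ)^(1-β)/2 ≤ (n:ℝ)/m := by
      have h1 : (n:ℝ)/(2*(n:ℝ)^β) ≤ (n:ℝ)/m := by gcongr
      have h2 : (n:ℝ)^(1-β)/2 = (n:ℝ)/(2*(n:ℝ)^β) := by
        rw [Real.rpow_sub hn0, Real.rpow_one, div_div, mul_comm]
      linarith
    have step2 : ((n:ℝ)^(1-β)/2)^(1/2-ε) ≤ ((n:ℝ)/m)^(1/2-ε) :=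
      Real.rpow_le_rpow (by positivity) step1 h12ε.le
    have step3 : (n:ℝ)^((1-β)*(1/2-ε))/2 ≤ ((n:ℝ)^(1-β)/2)^(1/2-ε) := by
      rw [Real.div_rpow (by positivity) (by norm_num), Real.rpow_mul hn0.le]
      have h2 : (2:ℝ)^(1/2-ε) ≤ 2 := by
        have := Real.rpow_le_rpow_of_exponent_le (by norm_num : (1:ℝ) ≤ 2)
          (by linarith : 1/2 - ε ≤ (1:ℝ))
        rwa [Real.rpow_one] at this
      gcongr
    have step4 : (n:ℝ)^((1-β)*(1/2-ε))/2 ≤ (K:ℝ) := step3.trans (step2.trans ha)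
    have hNm : (n:ℝ)^γ/4 ≤ (K:ℝ)/m := by
      have hcalc : (n:ℝ)^γ/4 = ((n:ℝ)^((1-β)*(1/2-ε))/2)/(2*(n:ℝ)^β) := by
        rw [hγdef, Real.rpow_sub hn0, div_div, div_div]
        congr 1
        ring
      rw [hcalc]
      calc ((n:ℝ)^((1-β)*(1/2-ε))/2)/(2*(n:ℝ)^β)
          ≤ ((n:ℝ)^((1-β)*(1/2-ε))/2)/m := by gcongr
        _ ≤ (K:ℝ)/m := by gcongr
    -- assemble
    have hexp : Real.exp (-(Δ * ((K:ℝ) * (1/m)))) ≤ Real.exp (-(Δ/4 * (n:ℝ)^γ)) := by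
      rw [Real.exp_le_exp, neg_le_neg_iff]
      have h1 : Δ/4 * (n:ℝ)^γ = Δ * ((n:ℝ)^γ/4) := by ring
      have h2 : Δ * ((K:ℝ) * (1/m)) = Δ * ((K:ℝ)/m) := by ring
      rw [h1, h2]
      exact mul_le_mul_of_nonneg_left hNm hΔpos.le
    have hmsq : m^2 ≤ 4 * (n:ℝ)^(2:ℝ) := by
      have h1 : m^2 ≤ (2*(n:ℝ)^β)^2 := by gcongr
      have h2 : ((n:ℝ)^β)^2 = (n:ℝ)^(β*2) := by
        rw [← Real.rpow_natCast ((n:ℝ)^β) 2, ← Real.rpow_mul hn0.le]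
        norm_num
      have h3 : (n:ℝ)^(β*2) ≤ (n:ℝ)^(2:ℝ) :=
        Real.rpow_le_rpow_of_exponent_le hn1 (by linarith)
      nlinarith
    calc m^2 * (μ n {ω | (1 + δ) * (K:ℝ) * (1/m) ≤ ∑ j, B n j ω}).toReal
        ≤ m^2 * Real.exp (-(Δ * ((K:ℝ) * (1/m)))) := by
          exact mul_le_mul_of_nonneg_left hch (by positivity)
      _ ≤ (4 * (n:ℝ)^(2:ℝ)) * Real.exp (-(Δ/4 * (n:ℝ)^γ)) := by
          exact mul_le_mul hmsq hexp (Real.exp_pos _).le (by positivity)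
end
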